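/- Let N ≥ 3 be an integer and 0 < a < 1. For every x ∈ ℝ^N with a < |x| < 1 and every y ∈ ℝ^N with a ≤ |y| ≤ 1, the series Σ_{m=1}^∞ [A_m(|x|)·|y|^m + B_m(|x|)·|y|^{−(m+N−2)}] · Z_m(x/|x|, y/|y|) converges absolutely; in particular the regular part H_a(x, y) is well defined. -/

import Mathlib

open scoped BigOperators
open MeasureTheory

/-- Surface area of the unit sphere `S^{N-1} ⊆ ℝ^N`, via the `(N-1)`-dimensional
Hausdorff measure. -/
noncomputable def sphereArea (N : ℕ) : ℝ :=
  (μH[(N : ℝ) - 1] (Metric.sphere (0 : EuclideanSpace ℝ (Fin N)) 1)).toReal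

/-- The zonal harmonic of degree `m` on `ℝ^N`. -/
noncomputable def zonal (N m : ℕ) (x ξ : EuclideanSpace ℝ (Fin N)) : ℝ :=
  if m = 0 then 1 else
    (N + 2 * m - 2 : ℝ) *
      ∑ k ∈ Finset.range (m / 2 + 1),
        (-1 : ℝ) ^ k *
          (∏ j ∈ Finset.range (m - k - 1), (N + 2 * j : ℝ)) /
            ((2 : ℝ) ^ k * (k.factorial : ℝ) * ((m - 2 * k).factorial : ℝ)) *
          (inner ℝ x ξ : ℝ) ^ (m - 2 * k) * ‖x‖ ^ (2 * k)

/-- The Gegenbauer polynomial `C_m^λ(t)`. -/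
noncomputable def gegenbauer (lam : ℝ) (m : ℕ) (t : ℝ) : ℝ :=
  ∑ k ∈ Finset.range (m / 2 + 1),
    (-1 : ℝ) ^ k * (ascPochhammer ℝ (m - k)).eval lam /
      ((k.factorial : ℝ) * ((m - 2 * k).factorial : ℝ)) * (2 * t) ^ (m - 2 * k)

/-- Fundamental solution `Γ(z) = 1/(ω_{N-1}(N-2)|z|^{N-2})` of `-Δ` in `ℝ^N`. -/
noncomputable def fundSol (N : ℕ) (z : EuclideanSpace ℝ (Fin N)) : ℝ :=
  1 / (sphereArea N * (N - 2 : ℝ) * ‖z‖ ^ (N - 2))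

/-- The coefficient `A_m(ρ)`. -/
noncomputable def Acoef (N : ℕ) (a : ℝ) (m : ℕ) (ρ : ℝ) : ℝ :=
  ((m + N - 2 : ℝ) / ((m : ℝ) * (2 * m + N - 2))) * (ρ ^ m / (a ^ (2 * m + N - 2) - 1)) *
    (1 + ((m : ℝ) / (m + N - 2)) * (a / ρ) ^ (2 * m + N - 2))

/-- The coefficient `B_m(ρ)`. -/
noncomputable def Bcoef (N : ℕ) (a : ℝ) (m : ℕ) (ρ : ℝ) : ℝ :=
  (a ^ (2 * m + N - 2) / (2 * m + N - 2 : ℝ)) * (ρ ^ m / (a ^ (2 * m + N - 2) - 1)) *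
    (1 + ((m : ℝ) / (m + N - 2)) * (ρ ^ (2 * m + N - 2))⁻¹)

/-- The constant `C_0`. -/
noncomputable def Czero (N : ℕ) (a : ℝ) : ℝ :=
  (1 / ((N - 2 : ℝ) * sphereArea N)) * (a ^ (N - 1) / (1 + a ^ (N - 1)))

/-- The regular part `H_a(x,y)` of the Neumann Green function of the annulus. -/
noncomputable def Hreg (N : ℕ) (a : ℝ) (x y : EuclideanSpace ℝ (Fin N)) : ℝ :=
  (1 / sphereArea N) *
      ∑' m : ℕ,
        (Acoef N a (m + 1) ‖x‖ * ‖y‖ ^ (m + 1) +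
            Bcoef N a (m + 1) ‖x‖ * (‖y‖ ^ (m + 1 + N - 2))⁻¹) *
          zonal N (m + 1) (‖x‖⁻¹ • x) (‖y‖⁻¹ • y) +
    Czero N a * (‖y‖ ^ (N - 2))⁻¹

/-- The Neumann Green function `G_a(x,y)` of the annulus. -/
noncomputable def GreenN (N : ℕ) (a : ℝ) (x y : EuclideanSpace ℝ (Fin N)) : ℝ :=
  1 / (sphereArea N * (N - 2 : ℝ) * ‖y - x‖ ^ (N - 2)) - Hreg N a x y

/-- The Laplacian of `f : ℝ^N → ℝ`, as the sum of the pure second partial derivatives. -/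
noncomputable def lap (N : ℕ) (f : EuclideanSpace ℝ (Fin N) → ℝ)
    (y : EuclideanSpace ℝ (Fin N)) : ℝ :=
  ∑ i : Fin N,
    iteratedFDeriv ℝ 2 f y ![EuclideanSpace.single i 1, EuclideanSpace.single i 1]


noncomputable section GegAux

open Finset

def gP (l : ℝ) (n : ℕ) : ℝ := (ascPochhammer ℝ n).eval l

lemma gP_zero (l : ℝ) : gP l 0 = 1 := by simp [gP]

lemma gP_succ (l : ℝ) (n : ℕ) : gP l (n + 1) = gP l n * (l + n) := by
  simp [gP, ascPochhammer_succ_right, Polynomial.eval_mul]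

def cc (l : ℝ) (j : ℕ) : ℝ := gP l j / j.factorial

lemma cc_rec (l : ℝ) (j : ℕ) : ((j:ℝ) + 1) * cc l (j + 1) = (l + j) * cc l j := by
  have hf : ((j+1).factorial : ℝ) = ((j:ℝ)+1) * (j.factorial : ℝ) := by
    rw [Nat.factorial_succ]; push_cast; ring
  have h0 : (j.factorial : ℝ) ≠ 0 := by positivity
  have h1 : ((j:ℝ)+1) ≠ 0 := by positivity
  rw [cc, cc, gP_succ, hf]
  field_simp

lemma cc_recC (l : ℝ) (j : ℕ) : ((j:ℂ) + 1) * (cc l (j + 1) : ℂ) = ((l:ℂ) + j) * (cc l j : ℂ) := by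
  exact_mod_cast congrArg (Complex.ofReal) (cc_rec l j)

def Rfn (l : ℝ) (m : ℕ) (z w : ℂ) : ℂ :=
  ∑ j ∈ range (m+1), ((cc l j * cc l (m-j) : ℝ) : ℂ) * z^j * w^(m-j)

lemma Rrec (l : ℝ) (m : ℕ) (z w : ℂ) :
    ((m:ℂ)+2) * Rfn l (m+2) z w
      = ((l:ℂ)+(m:ℂ)+1) * (z+w) * Rfn l (m+1) z w - (2*(l:ℂ)+(m:ℂ)) * (z*w) * Rfn l m z w := by
  have split : ((l:ℂ)+(m:ℂ)+1) * (z+w) * Rfn l (m+1) z w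
      = ((∑ j ∈ range (m+2),
            (((l:ℂ)+j) * (cc l j * cc l (m+1-j) : ℝ)) * (z^(j+1) * w^(m+1-j)))
        + (∑ j ∈ range (m+2),
            (((l:ℂ)+((m+1-j : ℕ):ℂ)) * (cc l j * cc l (m+1-j) : ℝ)) * (z^j * w^(m+2-j))))
      + ((∑ j ∈ range (m+2),
            (((m+1-j : ℕ):ℂ) * (cc l j * cc l (m+1-j) : ℝ)) * (z^(j+1) * w^(m+1-j)))
        + (∑ j ∈ range (m+2),
            (((j:ℕ):ℂ) * (cc l j * cc l (m+1-j) : ℝ)) * (z^j * w^(m+2-j)))) := by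
    rw [Rfn, mul_sum, ← sum_add_distrib, ← sum_add_distrib, ← sum_add_distrib]
    refine sum_congr rfl fun j hj => ?_
    simp only [mem_range] at hj
    have hj' : j ≤ m + 1 := by omega
    have hc1 : ((m+1-j : ℕ):ℂ) = (m:ℂ) + 1 - j := by
      push_cast [Nat.cast_sub hj']; ring
    have hz : z^(j+1) = z * z^j := by rw [pow_succ]; ring
    have hw : w^(m+2-j) = w * w^(m+1-j) := by
      have h : m+2-j = (m+1-j)+1 := by omega
      rw [h, pow_succ]; ring
    rw [hc1, hz, hw]; ring
  have hS1 : (∑ j ∈ range (m+2),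
        (((l:ℂ)+j) * (cc l j * cc l (m+1-j) : ℝ)) * (z^(j+1) * w^(m+1-j)))
      = ∑ i ∈ range (m+3), ((i:ℂ) * (cc l i * cc l (m+2-i) : ℝ)) * (z^i * w^(m+2-i)) := by
    rw [Finset.sum_range_succ'
      (fun i => ((i:ℂ) * (cc l i * cc l (m+2-i) : ℝ)) * (z^i * w^(m+2-i))) (m+2)]
    simp only [Nat.cast_zero, zero_mul, add_zero]
    refine sum_congr rfl fun j hj => ?_
    simp only [mem_range] at hj
    have h1 : m+2-(j+1) = m+1-j := by omega
    have hrec := cc_recC l j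
    rw [h1]
    push_cast
    linear_combination (-((cc l (m+1-j) : ℂ) * (z^(j+1) * w^(m+1-j)))) * hrec
  have hS3 : (∑ j ∈ range (m+2),
        (((l:ℂ)+((m+1-j : ℕ):ℂ)) * (cc l j * cc l (m+1-j) : ℝ)) * (z^j * w^(m+2-j)))
      = ∑ i ∈ range (m+3), (((m+2-i : ℕ):ℂ) * (cc l i * cc l (m+2-i) : ℝ)) * (z^i * w^(m+2-i)) := by
    rw [Finset.sum_range_succ
      (fun i => (((m+2-i : ℕ):ℂ) * (cc l i * cc l (m+2-i) : ℝ)) * (z^i * w^(m+2-i))) (m+2)]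
    simp only [Nat.sub_self, Nat.cast_zero, zero_mul, add_zero]
    refine sum_congr rfl fun j hj => ?_
    simp only [mem_range] at hj
    have h1 : (m+2-j) = (m+1-j)+1 := by omega
    have hrec := cc_recC l (m+1-j)
    have h2 : ((m+1-j : ℕ):ℂ) + 1 = ((m+2-j : ℕ):ℂ) := by
      rw [h1]; push_cast; ring
    rw [h1]
    push_cast [Nat.cast_sub (show j ≤ m+1 by omega), Nat.cast_sub (show j ≤ m+2 by omega)] at hrec ⊢
    linear_combination (-((cc l j : ℂ) * (z^j * w^((m+1-j)+1)))) * hrec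
  have hS2 : (∑ j ∈ range (m+2),
        (((m+1-j : ℕ):ℂ) * (cc l j * cc l (m+1-j) : ℝ)) * (z^(j+1) * w^(m+1-j)))
      = ∑ j ∈ range (m+1), (((l:ℂ)+((m-j : ℕ):ℂ)) * (cc l j * cc l (m-j) : ℝ)) * (z^(j+1) * w^(m+1-j)) := by
    rw [Finset.sum_range_succ
      (fun j => (((m+1-j : ℕ):ℂ) * (cc l j * cc l (m+1-j) : ℝ)) * (z^(j+1) * w^(m+1-j))) (m+1)]
    simp only [Nat.sub_self, Nat.cast_zero, zero_mul, add_zero]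
    refine sum_congr rfl fun j hj => ?_
    simp only [mem_range] at hj
    have h1 : m+1-j = (m-j)+1 := by omega
    have hrec := cc_recC l (m-j)
    rw [h1]
    push_cast
    linear_combination ((cc l j : ℂ) * (z^(j+1) * w^((m-j)+1))) * hrec
  have hS4 : (∑ j ∈ range (m+2),
        (((j:ℕ):ℂ) * (cc l j * cc l (m+1-j) : ℝ)) * (z^j * w^(m+2-j)))
      = ∑ j ∈ range (m+1), (((l:ℂ)+j) * (cc l j * cc l (m-j) : ℝ)) * (z^(j+1) * w^(m+1-j)) := by
    rw [Finset.sum_range_succ'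
      (fun j => (((j:ℕ):ℂ) * (cc l j * cc l (m+1-j) : ℝ)) * (z^j * w^(m+2-j))) (m+1)]
    simp only [Nat.cast_zero, zero_mul, add_zero]
    refine (sum_congr rfl fun j hj => ?_).symm
    simp only [mem_range] at hj
    have h1 : m+1-(j+1) = m-j := by omega
    have h2 : m+2-(j+1) = m+1-j := by omega
    have hrec := cc_recC l j
    rw [h1, h2]
    push_cast
    linear_combination (-((cc l (m-j) : ℂ) * (z^(j+1) * w^(m+1-j)))) * hrec
  -- combine S1 + S3 = (m+2) * Rfn (m+2)
  have h13 : (∑ i ∈ range (m+3), ((i:ℂ) * (cc l i * cc l (m+2-i) : ℝ)) * (z^i * w^(m+2-i)))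
      + (∑ i ∈ range (m+3), (((m+2-i : ℕ):ℂ) * (cc l i * cc l (m+2-i) : ℝ)) * (z^i * w^(m+2-i)))
      = ((m:ℂ)+2) * Rfn l (m+2) z w := by
    rw [Rfn, mul_sum, ← sum_add_distrib]
    refine sum_congr rfl fun i hi => ?_
    simp only [mem_range] at hi
    have h1 : ((m+2-i : ℕ):ℂ) = (m:ℂ)+2-i := by
      push_cast [Nat.cast_sub (show i ≤ m+2 by omega)]; ring
    rw [h1]; ring
  have h24 : (∑ j ∈ range (m+1), (((l:ℂ)+((m-j : ℕ):ℂ)) * (cc l j * cc l (m-j) : ℝ)) * (z^(j+1) * w^(m+1-j)))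
      + (∑ j ∈ range (m+1), (((l:ℂ)+j) * (cc l j * cc l (m-j) : ℝ)) * (z^(j+1) * w^(m+1-j)))
      = (2*(l:ℂ)+(m:ℂ)) * (z*w) * Rfn l m z w := by
    rw [Rfn, mul_sum, ← sum_add_distrib]
    refine sum_congr rfl fun j hj => ?_
    simp only [mem_range] at hj
    have h1 : ((m-j : ℕ):ℂ) = (m:ℂ)-j := by
      push_cast [Nat.cast_sub (show j ≤ m by omega)]; ring
    have hz : z^(j+1) = z * z^j := by rw [pow_succ]; ring
    have hw : w^(m+1-j) = w * w^(m-j) := by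
      have h : m+1-j = (m-j)+1 := by omega
      rw [h, pow_succ]; ring
    rw [h1, hz, hw]; ring
  rw [hS1, hS3, hS2, hS4] at split
  linear_combination -split - h13 - h24

def Afn (l : ℝ) (m k : ℕ) : ℝ :=
  if 2*k ≤ m then (-1:ℝ)^k * gP l (m-k) / ((k.factorial : ℝ) * ((m-2*k).factorial : ℝ)) else 0

lemma Akey (l : ℝ) (m k : ℕ) :
    ((m:ℝ)+2) * Afn l (m+2) k
      = (l+(m:ℝ)+1) * Afn l (m+1) k
        - (2*l+(m:ℝ)) * (if k = 0 then 0 else Afn l m (k-1)) := by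
  rcases Nat.eq_zero_or_pos k with rfl | hk
  · -- k = 0
    simp only [if_pos rfl, Afn, Nat.mul_zero, Nat.zero_le, if_true, Nat.sub_zero, pow_zero,
      Nat.factorial_zero, if_pos (by omega : 2*0 ≤ m+2), if_pos (by omega : 2*0 ≤ m+1)]
    rw [show m+2 = (m+1)+1 from rfl, gP_succ]
    have h1 : (((m+2).factorial : ℝ)) = ((m:ℝ)+2) * ((m+1).factorial : ℝ) := by
      rw [show m+2 = (m+1)+1 from rfl, Nat.factorial_succ]; push_cast; ring
    have h2 : ((m+1).factorial : ℝ) ≠ 0 := by positivity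
    rw [h1]
    field_simp
    push_cast
    ring
  · obtain ⟨k', rfl⟩ : ∃ k', k = k'+1 := ⟨k-1, by omega⟩
    simp only [if_neg (by omega : ¬ (k'+1 = 0)), Nat.add_sub_cancel]
    rcases le_or_gt (2*(k'+1)) m with hc1 | hc1
    · -- interior : 2k ≤ m
      obtain ⟨j, rfl⟩ : ∃ j, m = 2*(k'+1)+j := ⟨m - 2*(k'+1), by omega⟩
      rw [Afn, if_pos (by omega), Afn, if_pos (by omega), Afn, if_pos (by omega)]
      rw [show 2*(k'+1)+j+2-(k'+1) = (k'+1+j+1)+1 by omega,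
          show 2*(k'+1)+j+2-2*(k'+1) = j+2 by omega,
          show 2*(k'+1)+j+1-(k'+1) = k'+1+j+1 by omega,
          show 2*(k'+1)+j+1-2*(k'+1) = j+1 by omega,
          show 2*(k'+1)+j-k' = k'+1+j+1 by omega,
          show 2*(k'+1)+j-2*k' = j+2 by omega]
      rw [gP_succ]
      have e1 : ((j+2).factorial : ℝ) = ((j:ℝ)+2) * ((j+1).factorial : ℝ) := by
        rw [show j+2 = (j+1)+1 from rfl, Nat.factorial_succ]; push_cast; ring
      have e2 : (((k'+1).factorial : ℝ)) = ((k':ℝ)+1) * ((k'.factorial) : ℝ) := by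
        rw [Nat.factorial_succ]; push_cast; ring
      have p1 : ((j+1).factorial : ℝ) ≠ 0 := by positivity
      have p2 : ((k'.factorial) : ℝ) ≠ 0 := by positivity
      rw [e1, e2, pow_succ]
      push_cast
      field_simp
      ring
    · rcases (by omega : 2*(k'+1) = m+1 ∨ 2*(k'+1) = m+2 ∨ m+3 ≤ 2*(k'+1)) with hc2 | hc2 | hc2
      · -- 2k = m+1
        obtain rfl : m = 2*k'+1 := by omega
        rw [Afn, if_pos (by omega), Afn, if_pos (by omega), Afn, if_pos (by omega)]
        rw [show 2*k'+1+2-(k'+1) = (k'+1)+1 by omega,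
            show 2*k'+1+2-2*(k'+1) = 1 by omega,
            show 2*k'+1+1-(k'+1) = k'+1 by omega,
            show 2*k'+1+1-2*(k'+1) = 0 by omega,
            show 2*k'+1-k' = k'+1 by omega,
            show 2*k'+1-2*k' = 1 by omega]
        rw [gP_succ, gP_succ]
        have e2 : (((k'+1).factorial : ℝ)) = ((k':ℝ)+1) * ((k'.factorial) : ℝ) := by
          rw [Nat.factorial_succ]; push_cast; ring
        have p2 : ((k'.factorial) : ℝ) ≠ 0 := by positivity
        rw [e2, pow_succ]
        push_cast
        field_simp
        ring
      · -- 2k = m+2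
        obtain rfl : m = 2*k' := by omega
        rw [Afn, if_pos (by omega), Afn, if_neg (by omega), Afn, if_pos (by omega)]
        rw [show 2*k'+2-(k'+1) = k'+1 by omega,
            show 2*k'+2-2*(k'+1) = 0 by omega,
            show 2*k'-k' = k' by omega,
            show 2*k'-2*k' = 0 by omega]
        rw [gP_succ]
        have e2 : (((k'+1).factorial : ℝ)) = ((k':ℝ)+1) * ((k'.factorial) : ℝ) := by
          rw [Nat.factorial_succ]; push_cast; ring
        have p2 : ((k'.factorial) : ℝ) ≠ 0 := by positivity
        rw [e2, pow_succ]
        push_cast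
        field_simp
        ring
      · -- all zero
        rw [Afn, if_neg (by omega), Afn, if_neg (by omega), Afn, if_neg (by omega)]
        ring

def Lfn (l : ℝ) (m : ℕ) (z w : ℂ) : ℂ :=
  ∑ k ∈ range (m+1), ((Afn l m k : ℝ) : ℂ) * (z+w)^(m-2*k) * (z*w)^k

lemma Afn_zero_of_gt (l : ℝ) {m k : ℕ} (h : m < 2*k) : Afn l m k = 0 := by
  rw [Afn, if_neg (by omega)]

lemma Lrec (l : ℝ) (m : ℕ) (z w : ℂ) :
    ((m:ℂ)+2) * Lfn l (m+2) z w
      = ((l:ℂ)+(m:ℂ)+1) * (z+w) * Lfn l (m+1) z w - (2*(l:ℂ)+(m:ℂ)) * (z*w) * Lfn l m z w := by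
  have hA : (z+w) * Lfn l (m+1) z w
      = ∑ k ∈ range (m+3), ((Afn l (m+1) k : ℝ) : ℂ) * (z+w)^(m+2-2*k) * (z*w)^k := by
    rw [Lfn, mul_sum, Finset.sum_range_succ
      (fun k => ((Afn l (m+1) k : ℝ) : ℂ) * (z+w)^(m+2-2*k) * (z*w)^k) (m+2)]
    rw [Afn_zero_of_gt l (by omega : m+1 < 2*(m+2))]
    simp only [Complex.ofReal_zero, zero_mul, add_zero]
    refine sum_congr rfl fun k hk => ?_
    simp only [mem_range] at hk
    rcases le_or_gt (2*k) (m+1) with h | h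
    · rw [show m+2-2*k = (m+1-2*k)+1 by omega, pow_succ]; ring
    · rw [Afn_zero_of_gt l (by omega : m+1 < 2*k)]; simp
  have hB : (z*w) * Lfn l m z w
      = ∑ k ∈ range (m+3),
          (((if k = 0 then 0 else Afn l m (k-1) : ℝ)) : ℂ) * (z+w)^(m+2-2*k) * (z*w)^k := by
    rw [Finset.sum_range_succ'
      (fun k => (((if k = 0 then 0 else Afn l m (k-1) : ℝ)) : ℂ) * (z+w)^(m+2-2*k) * (z*w)^k) (m+2)]
    simp only [eq_self_iff_true, if_true, Complex.ofReal_zero, zero_mul, add_zero,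
      Nat.add_sub_cancel, if_neg (Nat.succ_ne_zero _)]
    rw [Lfn, mul_sum, Finset.sum_range_succ
      (fun k => ((Afn l m k : ℝ) : ℂ) * (z+w)^(m+2-2*(k+1)) * (z*w)^(k+1)) (m+1)]
    rw [Afn_zero_of_gt l (by omega : m < 2*(m+1))]
    simp only [Complex.ofReal_zero, zero_mul, add_zero]
    refine Finset.sum_congr rfl fun k hk => ?_
    simp only [mem_range] at hk
    rw [show m+2-2*(k+1) = m-2*k by omega, pow_succ]
    ring
  rw [mul_assoc ((l:ℂ)+(m:ℂ)+1), mul_assoc (2*(l:ℂ)+(m:ℂ)), hA, hB, Lfn, mul_sum, mul_sum, mul_sum, ← sum_sub_distrib]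
  refine sum_congr rfl fun k hk => ?_
  have key := Akey l m k
  have keyC : ((m:ℂ)+2) * ((Afn l (m+2) k : ℝ):ℂ)
      = ((l:ℂ)+(m:ℂ)+1) * ((Afn l (m+1) k : ℝ):ℂ)
        - (2*(l:ℂ)+(m:ℂ)) * (((if k = 0 then 0 else Afn l m (k-1) : ℝ)):ℂ) := by
    exact_mod_cast congrArg (Complex.ofReal) key
  calc ((m:ℂ)+2) * (((Afn l (m+2) k : ℝ):ℂ) * (z+w)^(m+2-2*k) * (z*w)^k)
      = (((m:ℂ)+2) * ((Afn l (m+2) k : ℝ):ℂ)) * ((z+w)^(m+2-2*k) * (z*w)^k) := by ring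
    _ = (((l:ℂ)+(m:ℂ)+1) * ((Afn l (m+1) k : ℝ):ℂ)
          - (2*(l:ℂ)+(m:ℂ)) * (((if k = 0 then 0 else Afn l m (k-1) : ℝ)):ℂ))
          * ((z+w)^(m+2-2*k) * (z*w)^k) := by rw [keyC]
    _ = _ := by ring

lemma gP_one (l : ℝ) : gP l 1 = l := by simp [gP]

lemma gP_pos {l : ℝ} (hl : 0 < l) (n : ℕ) : 0 < gP l n := by
  induction n with
  | zero => simp [gP_zero]
  | succ n ih => rw [gP_succ]; positivity

lemma cc_zero' (l : ℝ) : cc l 0 = 1 := by simp [cc, gP_zero]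

lemma cc_one (l : ℝ) : cc l 1 = l := by simp [cc, gP_one]

lemma cc_pos {l : ℝ} (hl : 0 < l) (j : ℕ) : 0 < cc l j := by
  have h1 := gP_pos hl j
  have h2 : (0:ℝ) < j.factorial := by positivity
  unfold cc; positivity

lemma Lfn_zero (l : ℝ) (z w : ℂ) : Lfn l 0 z w = 1 := by
  simp [Lfn, Afn, gP_zero]

lemma Rfn_zero (l : ℝ) (z w : ℂ) : Rfn l 0 z w = 1 := by
  simp [Rfn, cc_zero']

lemma Lfn_one (l : ℝ) (z w : ℂ) : Lfn l 1 z w = (l:ℂ) * (z + w) := by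
  rw [Lfn]
  rw [Finset.sum_range_succ, Finset.sum_range_succ, Finset.sum_range_zero]
  rw [Afn, if_pos (by omega), Afn, if_neg (by omega)]
  simp [gP_one]

lemma Rfn_one (l : ℝ) (z w : ℂ) : Rfn l 1 z w = (l:ℂ) * (z + w) := by
  rw [Rfn]
  rw [Finset.sum_range_succ, Finset.sum_range_succ, Finset.sum_range_zero]
  simp [cc_zero', cc_one]
  ring

lemma Lfn_eq_Rfn (l : ℝ) (m : ℕ) (z w : ℂ) : Lfn l m z w = Rfn l m z w := by
  have H : ∀ n, Lfn l n z w = Rfn l n z w ∧ Lfn l (n+1) z w = Rfn l (n+1) z w := by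
    intro n
    induction n with
    | zero => exact ⟨by rw [Lfn_zero, Rfn_zero], by rw [Lfn_one, Rfn_one]⟩
    | succ p ih =>
      refine ⟨ih.2, ?_⟩
      have hne : ((p:ℂ)+2) ≠ 0 := by
        have : ((p:ℂ)+2) = ((p+2 : ℕ) : ℂ) := by push_cast; ring
        rw [this]
        exact Nat.cast_ne_zero.mpr (by omega)
      apply mul_left_cancel₀ hne
      rw [show p+1+1 = p+2 from rfl, Lrec, Rrec, ih.1, ih.2]
  exact (H m).1

lemma Rfn_norm_le {l : ℝ} (hl : 0 < l) (m : ℕ) {z w : ℂ} (hz : ‖z‖ = 1) (hw : ‖w‖ = 1) :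
    ‖Rfn l m z w‖ ≤ ∑ j ∈ range (m+1), cc l j * cc l (m-j) := by
  refine (norm_sum_le _ _).trans ?_
  apply Finset.sum_le_sum
  intro j hj
  rw [norm_mul, norm_mul, norm_pow, norm_pow, hz, hw, one_pow, one_pow, mul_one, mul_one,
    Complex.norm_real, Real.norm_eq_abs]
  exact le_of_eq (abs_of_pos (mul_pos (cc_pos hl j) (cc_pos hl _)))

/-- Bernoulli-type step inequality. -/
lemma step_ineq (NN : ℕ) (hNN : 1 ≤ NN) (j : ℕ) :
    ((j:ℝ) + NN) * ((j:ℝ)+1)^(NN-1) ≤ ((j:ℝ)+2)^NN := by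
  have hj1 : (0:ℝ) < (j:ℝ)+1 := by positivity
  have ha : (-2:ℝ) ≤ 1/((j:ℝ)+1) := le_trans (by norm_num : (-2:ℝ) ≤ 0) (by positivity)
  have h := one_add_mul_le_pow ha (NN-1)
  have e2 : (1+1/((j:ℝ)+1))^(NN-1) * ((j:ℝ)+1)^(NN-1) = ((j:ℝ)+2)^(NN-1) := by
    rw [← mul_pow]
    have : (1+1/((j:ℝ)+1)) * ((j:ℝ)+1) = (j:ℝ)+2 := by field_simp; ring
    rw [this]
  have h3 : (1 + ((NN-1 : ℕ):ℝ) * (1/((j:ℝ)+1))) * ((j:ℝ)+1)^(NN-1)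
      ≤ ((j:ℝ)+2)^(NN-1) := by
    rw [← e2]
    exact mul_le_mul_of_nonneg_right h (by positivity)
  have hc : ((NN-1 : ℕ):ℝ) = (NN:ℝ) - 1 := by
    push_cast [Nat.cast_sub hNN]; ring
  have h4 : ((j:ℝ) + NN) * ((j:ℝ)+1)^(NN-1)
      = ((1 + ((NN-1 : ℕ):ℝ) * (1/((j:ℝ)+1))) * ((j:ℝ)+1)^(NN-1)) * ((j:ℝ)+1) := by
    rw [hc]
    field_simp
    ring
  have h5 : ((j:ℝ)+2)^(NN-1) * ((j:ℝ)+2) = ((j:ℝ)+2)^NN := by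
    rw [← pow_succ]
    congr 1
    omega
  have h6 : (0:ℝ) ≤ ((j:ℝ)+2)^(NN-1) := by positivity
  nlinarith [mul_le_mul_of_nonneg_right h3 hj1.le]

lemma cc_le {l : ℝ} (hl : 0 < l) (NN : ℕ) (hNN : 1 ≤ NN) (hlN : l ≤ NN) (j : ℕ) :
    cc l j ≤ ((j:ℝ)+1)^NN := by
  induction j with
  | zero => simp [cc_zero']
  | succ j ih =>
    have hj1 : (0:ℝ) < (j:ℝ)+1 := by positivity
    have hrec := cc_rec l j
    have hcc : cc l (j+1) = (l + j) * cc l j / ((j:ℝ)+1) := by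
      field_simp
      linarith [hrec]
    have h1 : (l + j) * cc l j ≤ ((NN:ℝ) + j) * ((j:ℝ)+1)^NN :=
      mul_le_mul (by linarith) ih (cc_pos hl j).le (by positivity)
    have h2 : ((NN:ℝ) + j) * ((j:ℝ)+1)^NN / ((j:ℝ)+1) = ((j:ℝ) + NN) * ((j:ℝ)+1)^(NN-1) := by
      rw [show NN = (NN-1)+1 by omega, pow_succ, Nat.add_sub_cancel]
      field_simp
      ring
    have h3 : (((j+1):ℕ):ℝ)+1 = (j:ℝ)+2 := by push_cast; ring
    rw [hcc, h3]
    calc (l + j) * cc l j / ((j:ℝ)+1) ≤ ((NN:ℝ) + j) * ((j:ℝ)+1)^NN / ((j:ℝ)+1) := by gcongr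
      _ = ((j:ℝ) + NN) * ((j:ℝ)+1)^(NN-1) := h2
      _ ≤ ((j:ℝ)+2)^NN := step_ineq NN hNN j

lemma prod_eq (N : ℕ) (hN : 3 ≤ N) (n : ℕ) :
    ((N:ℝ) - 2) * ∏ j ∈ range n, ((N:ℝ) + 2*j) = 2^(n+1) * gP (((N:ℝ)-2)/2) (n+1) := by
  induction n with
  | zero =>
    simp [gP_one]
    ring
  | succ n ih =>
    rw [Finset.prod_range_succ, gP_succ]
    have expand : ((N:ℝ)-2) * ((∏ j ∈ range n, ((N:ℝ)+2*j)) * ((N:ℝ)+2*n))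
        = (((N:ℝ)-2) * ∏ j ∈ range n, ((N:ℝ)+2*j)) * ((N:ℝ)+2*n) := by ring
    rw [expand, ih]
    push_cast
    ring

/-- The `|t| ≤ 1` bound on the Gegenbauer-type sum, via the complex factorization. -/
lemma Tsum_abs_le (l : ℝ) (hl : 0 < l) (m : ℕ) (t : ℝ) (ht : |t| ≤ 1) :
    |∑ k ∈ range (m+1), Afn l m k * (2*t)^(m-2*k)|
      ≤ ∑ j ∈ range (m+1), cc l j * cc l (m-j) := by
  have ht2 : 0 ≤ 1 - t^2 := by nlinarith [abs_nonneg t, sq_abs t, abs_le.mp ht]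
  set s : ℝ := Real.sqrt (1 - t^2) with hs
  have hs2 : s^2 = 1 - t^2 := Real.sq_sqrt ht2
  set z : ℂ := Complex.mk t s with hz
  have hre : z.re = t := rfl
  have him : z.im = s := rfl
  have hnsq : Complex.normSq z = 1 := by
    rw [Complex.normSq_mk]
    nlinarith [hs2]
  have hmc : z * (starRingEnd ℂ) z = 1 := by
    rw [Complex.mul_conj, hnsq]
    norm_num
  have hac : z + (starRingEnd ℂ) z = ((2*t : ℝ) : ℂ) := by
    rw [Complex.add_conj, hre]
  have hnz : ‖z‖ = 1 := by
    rw [Complex.norm_def, hnsq, Real.sqrt_one]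
  have hnzc : ‖(starRingEnd ℂ) z‖ = 1 := by
    rw [RCLike.norm_conj, hnz]
  have hcast : ((∑ k ∈ range (m+1), Afn l m k * (2*t)^(m-2*k) : ℝ) : ℂ)
      = Lfn l m z ((starRingEnd ℂ) z) := by
    rw [Lfn]
    push_cast
    refine Finset.sum_congr rfl fun k hk => ?_
    rw [hac, hmc, one_pow, mul_one]
    push_cast
    ring
  calc |∑ k ∈ range (m+1), Afn l m k * (2*t)^(m-2*k)|
      = ‖((∑ k ∈ range (m+1), Afn l m k * (2*t)^(m-2*k) : ℝ) : ℂ)‖ := by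
        rw [Complex.norm_real, Real.norm_eq_abs]
    _ = ‖Rfn l m z ((starRingEnd ℂ) z)‖ := by rw [hcast, Lfn_eq_Rfn]
    _ ≤ ∑ j ∈ range (m+1), cc l j * cc l (m-j) := Rfn_norm_le hl m hnz hnzc

lemma zonal_abs_le (N : ℕ) (hN : 3 ≤ N) (m : ℕ) (x ξ : EuclideanSpace ℝ (Fin N))
    (hx : ‖x‖ = 1) (hξ : ‖ξ‖ = 1) :
    |zonal N (m+1) x ξ| ≤ (2*(N:ℝ) + 2*(m:ℝ)) * ((m:ℝ)+2)^(2*N+1) := by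
  set l : ℝ := ((N:ℝ)-2)/2 with hldef
  have hN3 : (3:ℝ) ≤ (N:ℝ) := by exact_mod_cast hN
  have hl : 0 < l := by rw [hldef]; linarith
  have hNe : ((N:ℝ)-2) ≠ 0 := by linarith
  set t : ℝ := (inner ℝ x ξ : ℝ) with htdef
  have ht : |t| ≤ 1 := by
    rw [htdef]
    calc |(inner ℝ x ξ : ℝ)| ≤ ‖x‖ * ‖ξ‖ := abs_real_inner_le_norm x ξ
      _ = 1 := by rw [hx, hξ]; ring
  rw [zonal, if_neg (Nat.succ_ne_zero m)]
  have hS : (∑ k ∈ Finset.range ((m+1) / 2 + 1),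
        (-1 : ℝ) ^ k * (∏ j ∈ Finset.range (m+1 - k - 1), ((N:ℝ) + 2 * j)) /
            ((2 : ℝ) ^ k * (k.factorial : ℝ) * (((m+1) - 2 * k).factorial : ℝ)) *
          (inner ℝ x ξ : ℝ) ^ ((m+1) - 2 * k) * ‖x‖ ^ (2 * k))
      = (1/((N:ℝ)-2)) * ∑ k ∈ range (m+2), Afn l (m+1) k * (2*t)^(m+1-2*k) := by
    have hsub : Finset.range ((m+1)/2 + 1) ⊆ Finset.range (m+2) := by
      apply Finset.range_subset_range.mpr; omega
    rw [Finset.mul_sum, ← Finset.sum_subset hsub]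
    · refine Finset.sum_congr rfl fun k hk => ?_
      simp only [mem_range] at hk
      have h2k : 2*k ≤ m+1 := by omega
      have hkm : k ≤ m := by omega
      rw [hx, one_pow, mul_one, ← htdef]
      have hpe := prod_eq N hN (m-k)
      rw [show m-k+1 = m+1-k by omega] at hpe
      rw [show m+1-k-1 = m-k by omega]
      have hsplit : (2:ℝ)^(m+1-k) = 2^(m+1-2*k) * 2^k := by
        rw [← pow_add]; congr 1; omega
      have hP : (∏ j ∈ Finset.range (m-k), ((N:ℝ) + 2 * j))
          = 2^(m+1-2*k) * 2^k * gP l (m+1-k) / ((N:ℝ)-2) := by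
        rw [← hsplit]
        field_simp
        linarith [hpe]
      rw [hP, Afn, if_pos h2k, mul_pow]
      have hf1 : ((k.factorial : ℝ)) ≠ 0 := by positivity
      have hf2 : (((m+1-2*k).factorial : ℝ)) ≠ 0 := by positivity
      field_simp
    · intro k hk1 hk2
      simp only [mem_range] at hk1
      simp only [mem_range, not_lt] at hk2
      have : m+1 < 2*k := by omega
      rw [Afn, if_neg (by omega)]
      simp
  rw [hS]
  -- now bound
  have hDb : ∑ j ∈ range (m+2), cc l j * cc l (m+1-j) ≤ ((m:ℝ)+2)^(2*N+1) := by
    have hstep : ∀ j ∈ range (m+2), cc l j * cc l (m+1-j)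
        ≤ ((m:ℝ)+2)^N * ((m:ℝ)+2)^N := by
      intro j hj
      simp only [mem_range] at hj
      have hlN : l ≤ (N:ℕ) := by rw [hldef]; push_cast; linarith
      have hb1 : cc l j ≤ ((m:ℝ)+2)^N := by
        refine (cc_le hl N (by omega) hlN j).trans ?_
        apply pow_le_pow_left₀ (by positivity)
        have : (j:ℝ) ≤ (m:ℝ)+1 := by exact_mod_cast Nat.lt_succ_iff.mp hj
        linarith
      have hb2 : cc l (m+1-j) ≤ ((m:ℝ)+2)^N := by
        refine (cc_le hl N (by omega) hlN _).trans ?_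
        apply pow_le_pow_left₀ (by positivity)
        have : ((m+1-j : ℕ):ℝ) ≤ (m:ℝ)+1 := by
          have : m+1-j ≤ m+1 := by omega
          exact_mod_cast this
        linarith
      exact mul_le_mul hb1 hb2 (cc_pos hl _).le (by positivity)
    calc ∑ j ∈ range (m+2), cc l j * cc l (m+1-j)
        ≤ ∑ j ∈ range (m+2), ((m:ℝ)+2)^N * ((m:ℝ)+2)^N := Finset.sum_le_sum hstep
      _ = ((m:ℝ)+2) * (((m:ℝ)+2)^N * ((m:ℝ)+2)^N) := by
          rw [Finset.sum_const, Finset.card_range]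
          push_cast
          ring
      _ = ((m:ℝ)+2)^(2*N+1) := by
          rw [← pow_add, ← pow_succ']
          congr 1
          omega
  have hT := Tsum_abs_le l hl (m+1) t ht
  have hcoef : |(↑N + 2 * (↑(m+1):ℝ) - 2)| = (N:ℝ) + 2*m := by
    rw [abs_of_nonneg (by push_cast; linarith)]
    push_cast
    ring
  rw [abs_mul, hcoef, abs_mul, abs_of_nonneg (le_of_lt (div_pos one_pos (by linarith)))]
  have h1N : 1/((N:ℝ)-2) ≤ 1 := by
    rw [div_le_one (by linarith)]
    linarith
  have hTb : |∑ k ∈ range (m+2), Afn l (m+1) k * (2*t)^(m+1-2*k)| ≤ ((m:ℝ)+2)^(2*N+1) :=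
    le_trans hT hDb
  calc ((N:ℝ) + 2*m) * (1/((N:ℝ)-2) * |∑ k ∈ range (m+2), Afn l (m+1) k * (2*t)^(m+1-2*k)|)
      ≤ ((N:ℝ) + 2*m) * (1 * ((m:ℝ)+2)^(2*N+1)) := by
        apply mul_le_mul_of_nonneg_left _ (by linarith)
        exact mul_le_mul h1N hTb (abs_nonneg _) zero_le_one
    _ ≤ (2*(N:ℝ) + 2*(m:ℝ)) * ((m:ℝ)+2)^(2*N+1) := by
        rw [one_mul]
        apply mul_le_mul_of_nonneg_right (by linarith) (by positivity)

lemma Acoef_abs_le (N : ℕ) (hN : 3 ≤ N) {a ρ : ℝ} (ha0 : 0 < a) (ha1 : a < 1)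
    (haρ : a < ρ) (hρ1 : ρ < 1) (m : ℕ) :
    |Acoef N a (m+1) ρ| ≤ 2/(1-a) * ρ^(m+1) := by
  have hρ0 : (0:ℝ) < ρ := lt_trans ha0 haρ
  have hN3 : (3:ℝ) ≤ (N:ℝ) := by exact_mod_cast hN
  have hm0 : (0:ℝ) ≤ (m:ℝ) := Nat.cast_nonneg m
  rw [Acoef, abs_mul, abs_mul]
  have hae : a^(2*(m+1)+N-2) ≤ a := by
    calc a^(2*(m+1)+N-2) ≤ a^1 := pow_le_pow_of_le_one ha0.le ha1.le (by omega)
      _ = a := pow_one a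
  have hd : a^(2*(m+1)+N-2) - 1 < 0 := by linarith [lt_of_le_of_lt hae ha1]
  have h1 : |((↑(m+1) : ℝ) + (N:ℝ) - 2) / ((↑(m+1):ℝ) * (2*(↑(m+1):ℝ) + (N:ℝ) - 2))| ≤ 1 := by
    have hnum : (0:ℝ) ≤ (↑(m+1):ℝ) + (N:ℝ) - 2 := by push_cast; linarith
    have hden : (0:ℝ) < (↑(m+1):ℝ) * (2*(↑(m+1):ℝ) + (N:ℝ) - 2) := by push_cast; nlinarith
    rw [abs_div, abs_of_nonneg hnum, abs_of_pos hden, div_le_one hden]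
    push_cast; nlinarith
  have h2 : |ρ^(m+1) / (a^(2*(m+1)+N-2) - 1)| ≤ ρ^(m+1)/(1-a) := by
    have habs : |a^(2*(m+1)+N-2) - 1| = 1 - a^(2*(m+1)+N-2) := by
      rw [abs_of_neg hd]; ring
    rw [abs_div, abs_of_nonneg (by positivity : (0:ℝ) ≤ ρ^(m+1)), habs]
    gcongr <;> linarith
  have h3 : |1 + ((↑(m+1):ℝ)/((↑(m+1):ℝ) + (N:ℝ) - 2)) * (a/ρ)^(2*(m+1)+N-2)| ≤ 2 := by
    have hden2 : (0:ℝ) < (↑(m+1):ℝ) + (N:ℝ) - 2 := by push_cast; linarith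
    have hq : (0:ℝ) ≤ (↑(m+1):ℝ)/((↑(m+1):ℝ) + (N:ℝ) - 2) := by
      apply div_nonneg _ hden2.le; push_cast; linarith
    have hq1 : (↑(m+1):ℝ)/((↑(m+1):ℝ) + (N:ℝ) - 2) ≤ 1 := by
      rw [div_le_one hden2]; push_cast; linarith
    have hd1 : (a/ρ)^(2*(m+1)+N-2) ≤ 1 := by
      apply pow_le_one₀ (by positivity)
      rw [div_le_one hρ0]; linarith
    have hd0 : (0:ℝ) ≤ (a/ρ)^(2*(m+1)+N-2) := by positivity
    rw [abs_of_nonneg (by nlinarith)]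
    nlinarith
  calc |((↑(m+1) : ℝ) + (N:ℝ) - 2) / ((↑(m+1):ℝ) * (2*(↑(m+1):ℝ) + (N:ℝ) - 2))|
        * |ρ^(m+1) / (a^(2*(m+1)+N-2) - 1)|
        * |1 + ((↑(m+1):ℝ)/((↑(m+1):ℝ) + (N:ℝ) - 2)) * (a/ρ)^(2*(m+1)+N-2)|
      ≤ 1 * (ρ^(m+1)/(1-a)) * 2 := by
        have hpos : (0:ℝ) < 1 - a := by linarith
        apply mul_le_mul (mul_le_mul h1 h2 (abs_nonneg _) zero_le_one) h3 (abs_nonneg _)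
          (by positivity)
    _ = 2/(1-a) * ρ^(m+1) := by ring

lemma Bcoef_abs_le (N : ℕ) (hN : 3 ≤ N) {a ρ ry : ℝ} (ha0 : 0 < a) (ha1 : a < 1)
    (haρ : a < ρ) (hρ1 : ρ < 1) (hry : a ≤ ry) (m : ℕ) :
    |Bcoef N a (m+1) ρ * (ry^(m+1+N-2))⁻¹| ≤ 2/((1-a) * a^(N-2)) * (a/ρ)^(m+1) := by
  have hρ0 : (0:ℝ) < ρ := lt_trans ha0 haρ
  have hry0 : (0:ℝ) < ry := lt_of_lt_of_le ha0 hry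
  have hN3 : (3:ℝ) ≤ (N:ℝ) := by exact_mod_cast hN
  have hm0 : (0:ℝ) ≤ (m:ℝ) := Nat.cast_nonneg m
  have h1a : (0:ℝ) < 1 - a := by linarith
  rw [Bcoef, abs_mul, abs_mul, abs_mul]
  have hae : a^(2*(m+1)+N-2) ≤ a := by
    calc a^(2*(m+1)+N-2) ≤ a^1 := pow_le_pow_of_le_one ha0.le ha1.le (by omega)
      _ = a := pow_one a
  have hd : a^(2*(m+1)+N-2) - 1 < 0 := by linarith [lt_of_le_of_lt hae ha1]
  -- |a^E / (2(m+1)+N-2)| ≤ a^E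
  have h1 : |a^(2*(m+1)+N-2) / (2*(↑(m+1):ℝ) + (N:ℝ) - 2)| ≤ a^(2*(m+1)+N-2) := by
    have hden : (1:ℝ) ≤ 2*(↑(m+1):ℝ) + (N:ℝ) - 2 := by push_cast; linarith
    rw [abs_div, abs_of_nonneg (by positivity : (0:ℝ) ≤ a^(2*(m+1)+N-2)),
      abs_of_pos (by linarith : (0:ℝ) < 2*(↑(m+1):ℝ) + (N:ℝ) - 2)]
    calc a^(2*(m+1)+N-2) / (2*(↑(m+1):ℝ) + (N:ℝ) - 2) ≤ a^(2*(m+1)+N-2) / 1 := by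
          gcongr <;> linarith
      _ = a^(2*(m+1)+N-2) := by ring
  have h2 : |ρ^(m+1) / (a^(2*(m+1)+N-2) - 1)| ≤ ρ^(m+1)/(1-a) := by
    have habs : |a^(2*(m+1)+N-2) - 1| = 1 - a^(2*(m+1)+N-2) := by
      rw [abs_of_neg hd]; ring
    rw [abs_div, abs_of_nonneg (by positivity : (0:ℝ) ≤ ρ^(m+1)), habs]
    gcongr <;> linarith
  have hρE1 : ρ^(2*(m+1)+N-2) ≤ 1 := pow_le_one₀ hρ0.le hρ1.le
  have hρEpos : (0:ℝ) < ρ^(2*(m+1)+N-2) := by positivity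
  have hinv1 : (1:ℝ) ≤ (ρ^(2*(m+1)+N-2))⁻¹ := by
    nlinarith [mul_nonneg (inv_pos.mpr hρEpos).le
      (by linarith : (0:ℝ) ≤ 1 - ρ^(2*(m+1)+N-2)),
      mul_inv_cancel₀ (ne_of_gt hρEpos)]
  have h3 : |1 + ((↑(m+1):ℝ)/((↑(m+1):ℝ) + (N:ℝ) - 2)) * (ρ^(2*(m+1)+N-2))⁻¹|
      ≤ 2 * (ρ^(2*(m+1)+N-2))⁻¹ := by
    have hden2 : (0:ℝ) < (↑(m+1):ℝ) + (N:ℝ) - 2 := by push_cast; linarith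
    have hq : (0:ℝ) ≤ (↑(m+1):ℝ)/((↑(m+1):ℝ) + (N:ℝ) - 2) := by
      apply div_nonneg _ hden2.le; push_cast; linarith
    have hq1 : (↑(m+1):ℝ)/((↑(m+1):ℝ) + (N:ℝ) - 2) ≤ 1 := by
      rw [div_le_one hden2]; push_cast; linarith
    have hiv : (0:ℝ) < (ρ^(2*(m+1)+N-2))⁻¹ := by positivity
    rw [abs_of_nonneg (by nlinarith)]
    nlinarith
  have h4 : |(ry^(m+1+N-2))⁻¹| ≤ (a^(m+1+N-2))⁻¹ := by
    rw [abs_of_nonneg (by positivity : (0:ℝ) ≤ (ry^(m+1+N-2))⁻¹)]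
    gcongr
  have hmain : a^(2*(m+1)+N-2) * (ρ^(m+1)/(1-a)) * (2 * (ρ^(2*(m+1)+N-2))⁻¹) * (a^(m+1+N-2))⁻¹
      ≤ 2/((1-a) * a^(N-2)) * (a/ρ)^(m+1) := by
    have e1 : 2*(m+1)+N-2 = (m+1) + (m+1+N-2) := by omega
    have e2 : 2*(m+1)+N-2 = (m+1) + ((m+1) + (N-2)) := by omega
    have e3 : m+1+N-2 = (m+1) + (N-2) := by omega
    have hz1 : a^(2*(m+1)+N-2) = a^(m+1) * a^(m+1+N-2) := by rw [e1, pow_add]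
    have hz2 : ρ^(2*(m+1)+N-2) = ρ^(m+1) * (ρ^(m+1) * ρ^(N-2)) := by
      rw [e2, pow_add ρ (m+1) ((m+1)+(N-2)), pow_add ρ (m+1) (N-2)]
    have hz3 : (a/ρ)^(m+1) = a^(m+1) / ρ^(m+1) := div_pow a ρ (m+1)
    have haF : (0:ℝ) < a^(m+1+N-2) := by positivity
    have hρm : (0:ℝ) < ρ^(m+1) := by positivity
    have hρN : (0:ℝ) < ρ^(N-2) := by positivity
    have haN : (0:ℝ) < a^(N-2) := by positivity
    rw [hz1, hz2, hz3]
    have lhs_eq : a^(m+1) * a^(m+1+N-2) * (ρ^(m+1)/(1-a))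
          * (2 * (ρ^(m+1) * (ρ^(m+1) * ρ^(N-2)))⁻¹) * (a^(m+1+N-2))⁻¹
        = 2/(1-a) * (a^(m+1)/ρ^(m+1)) * (ρ^(N-2))⁻¹ := by
      field_simp
    rw [lhs_eq]
    have hρa : (ρ^(N-2))⁻¹ ≤ (a^(N-2))⁻¹ := by
      gcongr
    calc 2/(1-a) * (a^(m+1)/ρ^(m+1)) * (ρ^(N-2))⁻¹
        ≤ 2/(1-a) * (a^(m+1)/ρ^(m+1)) * (a^(N-2))⁻¹ := by
          apply mul_le_mul_of_nonneg_left hρa (by positivity)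
      _ = 2/((1-a) * a^(N-2)) * (a^(m+1)/ρ^(m+1)) := by
          field_simp
  calc |a^(2*(m+1)+N-2) / (2*(↑(m+1):ℝ) + (N:ℝ) - 2)| * |ρ^(m+1) / (a^(2*(m+1)+N-2) - 1)|
        * |1 + ((↑(m+1):ℝ)/((↑(m+1):ℝ) + (N:ℝ) - 2)) * (ρ^(2*(m+1)+N-2))⁻¹|
        * |(ry^(m+1+N-2))⁻¹|
      ≤ a^(2*(m+1)+N-2) * (ρ^(m+1)/(1-a)) * (2 * (ρ^(2*(m+1)+N-2))⁻¹) * (a^(m+1+N-2))⁻¹ := by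
        have hb1 : (0:ℝ) ≤ ρ^(m+1)/(1-a) := by positivity
        apply mul_le_mul _ h4 (abs_nonneg _) (by positivity)
        apply mul_le_mul _ h3 (abs_nonneg _) (by positivity)
        apply mul_le_mul h1 h2 (abs_nonneg _) (by positivity)
    _ ≤ 2/((1-a) * a^(N-2)) * (a/ρ)^(m+1) := hmain

theorem stmt12_aux (N : ℕ) (hN : 3 ≤ N) (a : ℝ) (ha0 : 0 < a) (ha1 : a < 1)
    (x y : EuclideanSpace ℝ (Fin N)) (hax : a < ‖x‖) (hx1 : ‖x‖ < 1)
    (hay : a ≤ ‖y‖) (hy1 : ‖y‖ ≤ 1) :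
    Summable (fun m : ℕ =>
      |(Acoef N a (m + 1) ‖x‖ * ‖y‖ ^ (m + 1) +
          Bcoef N a (m + 1) ‖x‖ * (‖y‖ ^ (m + 1 + N - 2))⁻¹) *
        zonal N (m + 1) (‖x‖⁻¹ • x) (‖y‖⁻¹ • y)|) := by
  have hN3 : (3:ℝ) ≤ (N:ℝ) := by exact_mod_cast hN
  have hρ0 : 0 < ‖x‖ := lt_trans ha0 hax
  have hy0 : 0 < ‖y‖ := lt_of_lt_of_le ha0 hay
  have h1a : (0:ℝ) < 1 - a := by linarith
  have hxhat : ‖(‖x‖⁻¹ • x : EuclideanSpace ℝ (Fin N))‖ = 1 := by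
    rw [norm_smul, norm_inv, norm_norm, inv_mul_cancel₀ (ne_of_gt hρ0)]
  have hyhat : ‖(‖y‖⁻¹ • y : EuclideanSpace ℝ (Fin N))‖ = 1 := by
    rw [norm_smul, norm_inv, norm_norm, inv_mul_cancel₀ (ne_of_gt hy0)]
  set r : ℝ := max ‖x‖ (a/‖x‖) with hrdef
  have hra : 0 < r := lt_of_lt_of_le hρ0 (le_max_left _ _)
  have hr1 : r < 1 := max_lt hx1 (by rw [div_lt_one hρ0]; exact hax)
  set K : ℝ := 2/(1-a) + 2/((1-a) * a^(N-2)) with hK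
  have hK1 : (0:ℝ) < 2/(1-a) := by positivity
  have hK2 : (0:ℝ) < 2/((1-a) * a^(N-2)) := by positivity
  have hK0 : 0 < K := by rw [hK]; linarith
  have hsum0 : Summable (fun n : ℕ => ((n:ℝ))^(2*N+2) * r^n) :=
    summable_pow_mul_geometric_of_norm_lt_one _
      (by rw [Real.norm_eq_abs, abs_of_pos hra]; exact hr1)
  have hsum1 : Summable (fun m : ℕ => (((m+(N+2) : ℕ)):ℝ)^(2*N+2) * r^(m+(N+2))) :=
    hsum0.comp_injective (add_left_injective (N+2))
  have hsum2 : Summable (fun m : ℕ =>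
      (2*K*(r^(N+2))⁻¹) * ((((m+(N+2) : ℕ)):ℝ)^(2*N+2) * r^(m+(N+2)))) :=
    hsum1.mul_left _
  refine Summable.of_nonneg_of_le (fun m => abs_nonneg _) (fun m => ?_) hsum2
  have hA := Acoef_abs_le N hN ha0 ha1 hax hx1 m
  have hB := Bcoef_abs_le N hN ha0 ha1 hax hx1 hay m
  have hZ := zonal_abs_le N hN m _ _ hxhat hyhat
  have hrm : (0:ℝ) ≤ r^m := by positivity
  have hpow : ‖x‖^(m+1) ≤ r^m := by
    calc ‖x‖^(m+1) ≤ r^(m+1) := pow_le_pow_left₀ hρ0.le (le_max_left _ _) _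
      _ = r^m * r := pow_succ r m
      _ ≤ r^m * 1 := by nlinarith
      _ = r^m := mul_one _
  have hpow2 : (a/‖x‖)^(m+1) ≤ r^m := by
    calc (a/‖x‖)^(m+1) ≤ r^(m+1) := pow_le_pow_left₀ (by positivity) (le_max_right _ _) _
      _ = r^m * r := pow_succ r m
      _ ≤ r^m * 1 := by nlinarith
      _ = r^m := mul_one _
  have hcoefb : |Acoef N a (m+1) ‖x‖ * ‖y‖^(m+1) +
      Bcoef N a (m+1) ‖x‖ * (‖y‖^(m+1+N-2))⁻¹| ≤ K * r^m := by
    have t1 : |Acoef N a (m+1) ‖x‖ * ‖y‖^(m+1)| ≤ 2/(1-a) * r^m := by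
      rw [abs_mul, abs_of_nonneg (pow_nonneg (norm_nonneg y) _)]
      calc |Acoef N a (m+1) ‖x‖| * ‖y‖^(m+1)
          ≤ (2/(1-a) * ‖x‖^(m+1)) * 1 :=
            mul_le_mul hA (pow_le_one₀ (norm_nonneg y) hy1) (by positivity) (by positivity)
        _ = 2/(1-a) * ‖x‖^(m+1) := mul_one _
        _ ≤ 2/(1-a) * r^m := by
            apply mul_le_mul_of_nonneg_left hpow hK1.le
    have t2 : |Bcoef N a (m+1) ‖x‖ * (‖y‖^(m+1+N-2))⁻¹| ≤ 2/((1-a) * a^(N-2)) * r^m := by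
      refine hB.trans ?_
      apply mul_le_mul_of_nonneg_left hpow2 hK2.le
    calc |Acoef N a (m+1) ‖x‖ * ‖y‖^(m+1) + Bcoef N a (m+1) ‖x‖ * (‖y‖^(m+1+N-2))⁻¹|
        ≤ |Acoef N a (m+1) ‖x‖ * ‖y‖^(m+1)| + |Bcoef N a (m+1) ‖x‖ * (‖y‖^(m+1+N-2))⁻¹| :=
          abs_add_le _ _
      _ ≤ 2/(1-a) * r^m + 2/((1-a) * a^(N-2)) * r^m := add_le_add t1 t2
      _ = K * r^m := by rw [hK]; ring
  rw [abs_mul]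
  have hzb : (2*(N:ℝ) + 2*(m:ℝ)) * ((m:ℝ)+2)^(2*N+1) ≤ 2 * ((m:ℝ)+N+2)^(2*N+2) := by
    have e1 : (2*(N:ℝ)+2*m) ≤ 2*((m:ℝ)+N+2) := by linarith [Nat.cast_nonneg (α := ℝ) m]
    have e2 : ((m:ℝ)+2)^(2*N+1) ≤ ((m:ℝ)+N+2)^(2*N+1) :=
      pow_le_pow_left₀ (by positivity) (by linarith) _
    calc (2*(N:ℝ) + 2*(m:ℝ)) * ((m:ℝ)+2)^(2*N+1)
        ≤ (2*((m:ℝ)+N+2)) * ((m:ℝ)+N+2)^(2*N+1) := by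
          apply mul_le_mul e1 e2 (by positivity) (by positivity)
      _ = 2 * ((m:ℝ)+N+2)^(2*N+2) := by rw [pow_succ]; ring
  have hfinal : (K * r^m) * (2 * ((m:ℝ)+N+2)^(2*N+2))
      = (2*K*(r^(N+2))⁻¹) * ((((m+(N+2) : ℕ)):ℝ)^(2*N+2) * r^(m+(N+2))) := by
    have hc : (((m+(N+2) : ℕ)):ℝ) = (m:ℝ)+N+2 := by push_cast; ring
    have hp : r^(m+(N+2)) = r^m * r^(N+2) := pow_add r m (N+2)
    rw [hc, hp]
    have hrne : r^(N+2) ≠ 0 := by positivity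
    field_simp
  calc |Acoef N a (m+1) ‖x‖ * ‖y‖^(m+1) + Bcoef N a (m+1) ‖x‖ * (‖y‖^(m+1+N-2))⁻¹|
        * |zonal N (m+1) (‖x‖⁻¹ • x) (‖y‖⁻¹ • y)|
      ≤ (K * r^m) * ((2*(N:ℝ) + 2*(m:ℝ)) * ((m:ℝ)+2)^(2*N+1)) :=
        mul_le_mul hcoefb hZ (abs_nonneg _) (by positivity)
    _ ≤ (K * r^m) * (2 * ((m:ℝ)+N+2)^(2*N+2)) := by
        apply mul_le_mul_of_nonneg_left hzb (by positivity)
    _ = (2*K*(r^(N+2))⁻¹) * ((((m+(N+2) : ℕ)):ℝ)^(2*N+2) * r^(m+(N+2))) := hfinal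

end GegAux

/-- absolute convergence of the series defining the regular part `H_a(x,y)`. -/
theorem stmt12 (N : ℕ) (hN : 3 ≤ N) (a : ℝ) (ha0 : 0 < a) (ha1 : a < 1)
    (x y : EuclideanSpace ℝ (Fin N)) (hax : a < ‖x‖) (hx1 : ‖x‖ < 1)
    (hay : a ≤ ‖y‖) (hy1 : ‖y‖ ≤ 1) :
    Summable (fun m : ℕ =>
      |(Acoef N a (m + 1) ‖x‖ * ‖y‖ ^ (m + 1) +
          Bcoef N a (m + 1) ‖x‖ * (‖y‖ ^ (m + 1 + N - 2))⁻¹) *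
        zonal N (m + 1) (‖x‖⁻¹ • x) (‖y‖⁻¹ • y)|) := by
  exact stmt12_aux N hN a ha0 ha1 x y hax hx1 hay hy1
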